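/- In the setting of the previous statement (S• the shifted cone of 1−φ on a graded-commutative DGA with multiplicative φ commuting with d, with the product ⟨(x,y),(x',y')⟩ = (xx', (−1)^j x y' + y φ(x'))): if s = (x₁, x₂) ∈ S^r is a cocycle (i.e., dx₁ = 0 and (1−φ)(x₁) = dx₂) and t ∈ S^{j} is a coboundary (t = d_S(z₁, z₂) for some (z₁, z₂) ∈ S^{j−1}), then the product ⟨s, t⟩ ∈ S^{r+j} is a coboundary. Consequently the product of a cocycle with a coboundary vanishes in cohomology. -/
import Mathlib


/-- The sign `(-1)^i` for `i : ℤ`. -/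
def sgn (i : ℤ) : ℤ := ((Int.negOnePow i : ℤˣ) : ℤ)

/-- Transport along an equality of degrees. -/
def gcast {R : Type*} [Semiring R] {A : ℤ → Type*} [∀ i, AddCommGroup (A i)]
    [∀ i, Module R (A i)] {i j : ℤ} (h : i = j) : A i →ₗ[R] A j :=
  h ▸ (LinearMap.id : A i →ₗ[R] A i)

section aux
variable {R : Type*} [CommRing R] {A : ℤ → Type*} [∀ i, AddCommGroup (A i)]
    [∀ i, Module R (A i)]

lemma d_gcast (d : ∀ i : ℤ, A i →ₗ[R] A (i + 1)) {i i' : ℤ} (h : i = i')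
    (h2 : i + 1 = i' + 1) (a : A i) :
    d i' (gcast (R := R) (A := A) h a) = gcast (R := R) (A := A) h2 (d i a) := by
  subst h; rfl

lemma φ_gcast (φ : ∀ i : ℤ, A i →ₗ[R] A i) {i i' : ℤ} (h : i = i') (a : A i) :
    φ i' (gcast (R := R) (A := A) h a) = gcast (R := R) (A := A) h (φ i a) := by
  subst h; rfl

lemma mul_gcast (mul : ∀ i j k : ℤ, i + j = k → (A i →ₗ[R] (A j →ₗ[R] A k)))
    {i j j' k k' : ℤ} (hj : j = j') (hk : k = k') (h : i + j = k) (h' : i + j' = k')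
    (a : A i) (b : A j) :
    mul i j' k' h' a (gcast (R := R) (A := A) hj b) =
      gcast (R := R) (A := A) hk (mul i j k h a b) := by
  subst hj; subst hk; rfl

lemma mul_gcast_left (mul : ∀ i j k : ℤ, i + j = k → (A i →ₗ[R] (A j →ₗ[R] A k)))
    {i i' j k k' : ℤ} (hi : i = i') (hk : k = k') (h : i + j = k) (h' : i' + j = k')
    (a : A i) (b : A j) :
    mul i' j k' h' (gcast (R := R) (A := A) hi a) b =
      gcast (R := R) (A := A) hk (mul i j k h a b) := by
  subst hi; subst hk; rfl

lemma sgn_sgn (i : ℤ) {M : Type*} [AddCommGroup M] (a : M) :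
    sgn i • sgn i • a = a := by
  rw [smul_smul]
  unfold sgn
  rw [← Units.val_mul, ← Int.negOnePow_add, Int.negOnePow_even _ ⟨i, rfl⟩]
  simp

lemma sgn_mul_sgn_pred (r : ℤ) : sgn r * sgn (r - 1) = -1 := by
  unfold sgn
  rw [← Units.val_mul, ← Int.negOnePow_add, Int.negOnePow_odd _ ⟨r - 1, by ring⟩]
  simp

end aux

/-- On the shifted cone `S•` of `1-φ` on a graded-commutative DGA `A•` (with `φ`
multiplicative and commuting with `d`), with product
`⟨(x,y),(x',y')⟩ = (xx', (-1)^r x y' + y φ(x'))`: the product of a cocycle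
`s = (x₁,x₂) ∈ S^r` with a coboundary `t = d_S(z₁,z₂) ∈ S^j` is a coboundary in
`S^{r+j}`; hence the product of a cocycle with a coboundary vanishes in cohomology. -/
theorem syntomic_cone_cocycle_mul_coboundary
    {R : Type*} [CommRing R] (A : ℤ → Type*)
    [∀ i, AddCommGroup (A i)] [∀ i, Module R (A i)]
    (mul : ∀ i j k : ℤ, i + j = k → (A i →ₗ[R] (A j →ₗ[R] A k)))
    (d : ∀ i : ℤ, A i →ₗ[R] A (i + 1))
    (hd2 : ∀ (i : ℤ) (a : A i), d (i + 1) (d i a) = 0)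
    (hleib : ∀ (i j k : ℤ) (h : i + j = k) (a : A i) (b : A j),
      d k (mul i j k h a b) =
        mul (i + 1) j (k + 1) (by omega) (d i a) b +
          sgn i • mul i (j + 1) (k + 1) (by omega) a (d j b))
    (hcomm : ∀ (i j k : ℤ) (h : i + j = k) (a : A i) (b : A j),
      mul i j k h a b = sgn (i * j) • mul j i k (by omega) b a)
    (φ : ∀ i : ℤ, A i →ₗ[R] A i)
    (hφmul : ∀ (i j k : ℤ) (h : i + j = k) (a : A i) (b : A j),
      φ k (mul i j k h a b) = mul i j k h (φ i a) (φ j b))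
    (hφd : ∀ (i : ℤ) (a : A i), d i (φ i a) = φ (i + 1) (d i a))
    -- a cocycle `s = (x₁, x₂) ∈ S^r`:  `d x₁ = 0` and `(1-φ)(x₁) = d x₂`
    (r : ℤ) (x₁ : A r) (x₂ : A (r - 1))
    (hs₁ : d r x₁ = 0)
    (hs₂ : x₁ - φ r x₁ = gcast (R := R) (A := A) (by omega) (d (r - 1) x₂))
    -- a coboundary `t = d_S(z₁, z₂) ∈ S^j` with `(z₁, z₂) ∈ S^{j-1}`
    (j : ℤ) (z₁ : A (j - 1)) (z₂ : A (j - 2)) :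
    -- the first and second components of `t = d_S(z₁,z₂)`
    let t₁ : A j := gcast (R := R) (A := A) (by omega) (d (j - 1) z₁)
    let t₂ : A (j - 1) :=
      z₁ - φ (j - 1) z₁ - gcast (R := R) (A := A) (by omega) (d (j - 2) z₂)
    -- the components of the product `⟨s, t⟩ ∈ S^{r+j}`
    let st₁ : A (r + j) := mul r j (r + j) rfl x₁ t₁
    let st₂ : A (r + j - 1) :=
      sgn r • mul r (j - 1) (r + j - 1) (by omega) x₁ t₂ +
        mul (r - 1) j (r + j - 1) (by omega) x₂ (φ j t₁)
    -- `⟨s,t⟩` is a coboundary: `⟨s,t⟩ = d_S(w₁,w₂)` for some `(w₁,w₂) ∈ S^{r+j-1}`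
    ∃ (w₁ : A (r + j - 1)) (w₂ : A (r + j - 2)),
      st₁ = gcast (R := R) (A := A) (by omega) (d (r + j - 1) w₁) ∧
      st₂ = w₁ - φ (r + j - 1) w₁ -
        gcast (R := R) (A := A) (by omega) (d (r + j - 2) w₂) := by
  intro t₁ t₂ st₁ st₂
  have hA : r + (j - 1) = r + j - 1 := by omega
  have hB : r - 1 + j = r + j - 1 := by omega
  refine ⟨sgn r • mul r (j - 1) (r + j - 1) hA x₁ z₁,
    mul r (j - 2) (r + j - 2) (by omega) x₁ z₂ +
      sgn r • mul (r - 1) (j - 1) (r + j - 2) (by omega) x₂ (φ (j - 1) z₁), ?_, ?_⟩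
  · show mul r j (r + j) rfl x₁
        (gcast (R := R) (A := A) (by omega) (d (j - 1) z₁)) = _
    rw [map_zsmul, map_zsmul, hleib r (j - 1) (r + j - 1) hA x₁ z₁, hs₁]
    simp only [map_zero, LinearMap.zero_apply, zero_add]
    rw [map_zsmul, sgn_sgn,
      mul_gcast mul (show j - 1 + 1 = j by omega) (show r + j - 1 + 1 = r + j by omega)
        (by omega) rfl x₁ (d (j - 1) z₁)]
  · have hφw : φ (r + j - 1) (sgn r • mul r (j - 1) (r + j - 1) hA x₁ z₁) =
        sgn r • mul r (j - 1) (r + j - 1) hA (φ r x₁) (φ (j - 1) z₁) := by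
      rw [map_zsmul, hφmul]
    have hd1 : gcast (R := R) (A := A) (show r + j - 2 + 1 = r + j - 1 by omega)
        (d (r + j - 2) (mul r (j - 2) (r + j - 2) (by omega) x₁ z₂)) =
        sgn r • mul r (j - 1) (r + j - 1) hA x₁
          (gcast (R := R) (A := A) (show j - 2 + 1 = j - 1 by omega) (d (j - 2) z₂)) := by
      rw [hleib r (j - 2) (r + j - 2) (by omega) x₁ z₂, hs₁]
      simp only [map_zero, LinearMap.zero_apply, zero_add]
      rw [map_zsmul,
        mul_gcast mul (show j - 2 + 1 = j - 1 by omega)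
          (show r + j - 2 + 1 = r + j - 1 by omega) (by omega) hA x₁ (d (j - 2) z₂)]
    have hd2' : gcast (R := R) (A := A) (show r + j - 2 + 1 = r + j - 1 by omega)
        (d (r + j - 2) (mul (r - 1) (j - 1) (r + j - 2) (by omega) x₂ (φ (j - 1) z₁))) =
        mul r (j - 1) (r + j - 1) hA (x₁ - φ r x₁) (φ (j - 1) z₁) +
          sgn (r - 1) • mul (r - 1) j (r + j - 1) hB x₂ (φ j t₁) := by
      rw [hleib (r - 1) (j - 1) (r + j - 2) (by omega) x₂ (φ (j - 1) z₁)]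
      rw [map_add, map_zsmul]
      congr 1
      · rw [← mul_gcast_left mul (show r - 1 + 1 = r by omega)
            (show r + j - 2 + 1 = r + j - 1 by omega) (by omega) hA (d (r - 1) x₂)
            (φ (j - 1) z₁)]
        rw [show gcast (R := R) (A := A) (show r - 1 + 1 = r by omega) (d (r - 1) x₂) =
          x₁ - φ r x₁ from hs₂.symm]
      · congr 1
        rw [hφd (j - 1) z₁,
          ← mul_gcast mul (show j - 1 + 1 = j by omega)
            (show r + j - 2 + 1 = r + j - 1 by omega) (by omega) hB x₂
            (φ (j - 1 + 1) (d (j - 1) z₁))]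
        show _ = mul (r - 1) j (r + j - 1) hB x₂ (φ j t₁)
        rw [show φ j t₁ = gcast (R := R) (A := A) (show j - 1 + 1 = j by omega)
          (φ (j - 1 + 1) (d (j - 1) z₁)) from
          φ_gcast φ (show j - 1 + 1 = j by omega) (d (j - 1) z₁)]
    show sgn r • mul r (j - 1) (r + j - 1) hA x₁
          (z₁ - φ (j - 1) z₁ -
            gcast (R := R) (A := A) (show j - 2 + 1 = j - 1 by omega) (d (j - 2) z₂)) +
        mul (r - 1) j (r + j - 1) hB x₂ (φ j t₁) = _
    rw [map_add, map_add, map_zsmul, map_zsmul, map_zsmul, hd1, hd2',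
      hφmul r (j - 1) (r + j - 1) hA x₁ z₁]
    simp only [map_sub, LinearMap.sub_apply, smul_sub, smul_add, smul_smul,
      sgn_mul_sgn_pred, neg_smul, one_smul, neg_one_smul]
    abel
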